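/- Let M be a connected matroid on a finite set E admitting a handle decomposition of length k ≥ 2. Then M has at least k + 1 pairwise disjoint non-disconnective handles: there exist handles H₀,…,H_k of M, pairwise disjoint, such that M∖H_i is connected for each i. -/
import Mathlib


/-- A matroid on the finite ground set `E`, given by its independent sets. -/
structure FinMatroid (E : Type) [Fintype E] [DecidableEq E] where
  /-- The independent sets. -/
  Indep : Finset E → Prop
  /-- The empty set is independent. -/
  empty_indep : Indep ∅
  /-- Subsets of independent sets are independent. -/
  subset_indep : ∀ ⦃I J : Finset E⦄, Indep J → I ⊆ J → Indep I
  /-- The augmentation axiom. -/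
  aug : ∀ ⦃I J : Finset E⦄, Indep I → Indep J → I.card < J.card →
    ∃ e ∈ J, e ∉ I ∧ Indep (insert e I)

namespace FinMatroid

variable {E : Type} [Fintype E] [DecidableEq E] (M : FinMatroid E)

/-- A circuit: a minimal dependent set. -/
def IsCircuit (C : Finset E) : Prop :=
  ¬ M.Indep C ∧ ∀ D ⊂ C, M.Indep D

/-- A handle: a nonempty subset `H ⊆ E` such that every circuit meeting `H`
contains `H`. -/
def Handle (H : Finset E) : Prop :=
  H.Nonempty ∧ ∀ C : Finset E, M.IsCircuit C → (∃ x ∈ C, x ∈ H) → H ⊆ C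

/-- The restriction `M|_F` is connected: `F` is nonempty and any two distinct elements
of `F` lie on a common circuit contained in `F` (the circuits of `M|_F` are exactly the
circuits of `M` contained in `F`). -/
def ConnectedOn (F : Finset E) : Prop :=
  F.Nonempty ∧ ∀ e ∈ F, ∀ f ∈ F, e ≠ f →
    ∃ C : Finset E, M.IsCircuit C ∧ C ⊆ F ∧ e ∈ C ∧ f ∈ C

/-- The matroid is connected: the ground set is nonempty and any two distinct elements
lie on a common circuit. -/
def Connected : Prop :=
  M.ConnectedOn Finset.univ

/-- `H` is a handle of the restriction `M|_F`: `H` is a nonempty subset of `F` and every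
circuit of `M|_F` (i.e. circuit of `M` contained in `F`) meeting `H` contains `H`. -/
def HandleOn (F H : Finset E) : Prop :=
  H.Nonempty ∧ H ⊆ F ∧
    ∀ C : Finset E, M.IsCircuit C → C ⊆ F → (∃ x ∈ C, x ∈ H) → H ⊆ C


section Aux

variable {M}

theorem circuit_nonempty {C : Finset E} (hC : M.IsCircuit C) : C.Nonempty := by
  rcases C.eq_empty_or_nonempty with rfl | h
  · exact absurd M.empty_indep hC.1
  · exact h

theorem circuit_eq_of_subset {C D : Finset E} (hC : M.IsCircuit C) (hD : M.IsCircuit D)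
    (h : C ⊆ D) : C = D := by
  by_contra hne
  exact hC.1 (hD.2 C (ssubset_of_subset_of_ne h hne))

theorem exists_circuit_subset : ∀ D : Finset E, ¬ M.Indep D → ∃ C, C ⊆ D ∧ M.IsCircuit C := by
  intro D
  induction D using Finset.strongInduction with
  | _ D ih =>
    intro hD
    by_cases h : ∀ D' ⊂ D, M.Indep D'
    · exact ⟨D, Finset.Subset.rfl, hD, h⟩
    · push_neg at h
      obtain ⟨D', hsub, hdep⟩ := h
      obtain ⟨C, hCsub, hC⟩ := ih D' hsub hdep
      exact ⟨C, hCsub.trans hsub.subset, hC⟩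

theorem indep_extend : ∀ (d : ℕ) (J I : Finset E), M.Indep I → M.Indep J → I.card ≤ J.card →
    d = J.card - I.card →
    ∃ I', I ⊆ I' ∧ I' ⊆ I ∪ J ∧ M.Indep I' ∧ I'.card = J.card := by
  intro d
  induction d with
  | zero =>
    intro J I hI _ h hd
    exact ⟨I, Finset.Subset.rfl, Finset.subset_union_left, hI, by omega⟩
  | succ d ih =>
    intro J I hI hJ h hd
    have hlt : I.card < J.card := by omega
    obtain ⟨e, heJ, heI, hins⟩ := M.aug hI hJ hlt
    have hcard : (insert e I).card = I.card + 1 := Finset.card_insert_of_notMem heI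
    obtain ⟨I', h1, h2, h3, h4⟩ := ih J (insert e I) hins hJ (by omega) (by omega)
    refine ⟨I', (Finset.subset_insert e I).trans h1, ?_, h3, h4⟩
    intro x hx
    rcases Finset.mem_union.mp (h2 hx) with hx' | hx'
    · rcases Finset.mem_insert.mp hx' with rfl | hx''
      · exact Finset.mem_union_right _ heJ
      · exact Finset.mem_union_left _ hx''
    · exact Finset.mem_union_right _ hx'

theorem weak_elim {C₁ C₂ : Finset E} (h₁ : M.IsCircuit C₁) (h₂ : M.IsCircuit C₂)
    (hne : C₁ ≠ C₂) {x : E} (hx₁ : x ∈ C₁) (hx₂ : x ∈ C₂) :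
    ∃ C, M.IsCircuit C ∧ C ⊆ (C₁ ∪ C₂).erase x := by
  have hD : ¬ M.Indep ((C₁ ∪ C₂).erase x) := by
    intro hD
    have h21 : ¬ C₂ ⊆ C₁ := fun h => hne (circuit_eq_of_subset h₂ h₁ h).symm
    have h12 : ¬ C₁ ⊆ C₂ := fun h => hne (circuit_eq_of_subset h₁ h₂ h)
    obtain ⟨y, hy₂, hy₁⟩ := Finset.not_subset.mp h21
    obtain ⟨z, hz₁, hz₂⟩ := Finset.not_subset.mp h12
    have hI₀ : M.Indep (C₂.erase y) := h₂.2 _ (Finset.erase_ssubset hy₂)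
    have hlt : C₂.card < (C₁ ∪ C₂).card := by
      apply Finset.card_lt_card
      exact ⟨Finset.subset_union_right, fun h => hz₂ (h (Finset.mem_union_left _ hz₁))⟩
    have hcard : (C₂.erase y).card ≤ ((C₁ ∪ C₂).erase x).card := by
      rw [Finset.card_erase_of_mem hy₂, Finset.card_erase_of_mem (Finset.mem_union_left _ hx₁)]
      omega
    obtain ⟨I', hII, hIU, hIind, hIcard⟩ :=
      indep_extend _ _ _ hI₀ hD hcard rfl
    have hIsub : I' ⊆ C₁ ∪ C₂ := by
      refine hIU.trans (Finset.union_subset ?_ ?_)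
      · exact (Finset.erase_subset _ _).trans Finset.subset_union_right
      · exact Finset.erase_subset _ _
    have hone : ((C₁ ∪ C₂) \ I').card = 1 := by
      rw [Finset.card_sdiff_of_subset hIsub, hIcard,
        Finset.card_erase_of_mem (Finset.mem_union_left _ hx₁)]
      have : 0 < (C₁ ∪ C₂).card := Finset.card_pos.mpr ⟨x, Finset.mem_union_left _ hx₁⟩
      omega
    obtain ⟨w, hw⟩ := Finset.card_eq_one.mp hone
    by_cases hyI : y ∈ I'
    · have : C₂ ⊆ I' := by
        intro a ha
        rcases eq_or_ne a y with rfl | hay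
        · exact hyI
        · exact hII (Finset.mem_erase.mpr ⟨hay, ha⟩)
      exact h₂.1 (M.subset_indep hIind this)
    · have hwy : w = y := by
        have hymem : y ∈ (C₁ ∪ C₂) \ I' :=
          Finset.mem_sdiff.mpr ⟨Finset.mem_union_right _ hy₂, hyI⟩
        rw [hw] at hymem
        exact (Finset.mem_singleton.mp hymem).symm
      have : C₁ ⊆ I' := by
        intro a ha
        by_contra haI
        have hamem : a ∈ (C₁ ∪ C₂) \ I' :=
          Finset.mem_sdiff.mpr ⟨Finset.mem_union_left _ ha, haI⟩
        rw [hw] at hamem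
        have := Finset.mem_singleton.mp hamem
        subst this
        rw [hwy] at ha
        exact hy₁ ha
      exact h₁.1 (M.subset_indep hIind this)
  obtain ⟨C, hCsub, hC⟩ := exists_circuit_subset _ hD
  exact ⟨C, hC, hCsub⟩

theorem strong_elim_aux : ∀ n (C₁ C₂ : Finset E), (C₁ ∪ C₂).card ≤ n →
    M.IsCircuit C₁ → M.IsCircuit C₂ → ∀ x a, x ∈ C₁ → x ∈ C₂ → a ∈ C₁ → a ∉ C₂ →
    ∃ C, M.IsCircuit C ∧ C ⊆ (C₁ ∪ C₂).erase x ∧ a ∈ C := by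
  intro n
  induction n with
  | zero =>
    intro C₁ C₂ hcard _ _ x a hx₁ _ _ _
    have : (C₁ ∪ C₂) = ∅ := Finset.card_eq_zero.mp (Nat.le_zero.mp hcard)
    exact absurd (this ▸ Finset.mem_union_left _ hx₁) (Finset.notMem_empty x)
  | succ n ih =>
    intro C₁ C₂ hcard h₁ h₂ x a hx₁ hx₂ ha₁ ha₂
    have hne : C₁ ≠ C₂ := fun h => ha₂ (h ▸ ha₁)
    obtain ⟨C₃, hC₃, hC₃sub⟩ := weak_elim h₁ h₂ hne hx₁ hx₂
    by_cases haC₃ : a ∈ C₃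
    · exact ⟨C₃, hC₃, hC₃sub, haC₃⟩
    have hC₃union : C₃ ⊆ C₁ ∪ C₂ := hC₃sub.trans (Finset.erase_subset _ _)
    have hxC₃ : x ∉ C₃ := fun h => (Finset.mem_erase.mp (hC₃sub h)).1 rfl
    have hns : ¬ C₃ ⊆ C₁ := by
      intro h
      exact hxC₃ ((circuit_eq_of_subset hC₃ h₁ h) ▸ hx₁)
    obtain ⟨y, hyC₃, hyC₁⟩ := Finset.not_subset.mp hns
    have hyC₂ : y ∈ C₂ := by
      rcases Finset.mem_union.mp (hC₃union hyC₃) with h | h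
      · exact absurd h hyC₁
      · exact h
    have hmeas₁ : (C₂ ∪ C₃).card ≤ n := by
      have hsub : C₂ ∪ C₃ ⊆ C₁ ∪ C₂ :=
        Finset.union_subset Finset.subset_union_right hC₃union
      have hss : C₂ ∪ C₃ ⊂ C₁ ∪ C₂ := by
        refine ⟨hsub, fun h => ?_⟩
        have : a ∈ C₂ ∪ C₃ := h (Finset.mem_union_left _ ha₁)
        rcases Finset.mem_union.mp this with h' | h'
        · exact ha₂ h'
        · exact haC₃ h'
      have := Finset.card_lt_card hss
      omega
    obtain ⟨C₄, hC₄, hC₄sub, hxC₄⟩ := ih C₂ C₃ hmeas₁ h₂ hC₃ y x hyC₂ hyC₃ hx₂ hxC₃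
    have hC₄union : C₄ ⊆ C₁ ∪ C₂ :=
      (hC₄sub.trans (Finset.erase_subset _ _)).trans
        (Finset.union_subset Finset.subset_union_right hC₃union)
    have hyC₄ : y ∉ C₄ := fun h => (Finset.mem_erase.mp (hC₄sub h)).1 rfl
    have haC₄ : a ∉ C₄ := by
      intro h
      rcases Finset.mem_union.mp ((Finset.erase_subset _ _) (hC₄sub h)) with h' | h'
      · exact ha₂ h'
      · exact haC₃ h'
    have hmeas₂ : (C₁ ∪ C₄).card ≤ n := by
      have hsub : C₁ ∪ C₄ ⊆ C₁ ∪ C₂ :=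
        Finset.union_subset Finset.subset_union_left hC₄union
      have hss : C₁ ∪ C₄ ⊂ C₁ ∪ C₂ := by
        refine ⟨hsub, fun h => ?_⟩
        have : y ∈ C₁ ∪ C₄ := h (Finset.mem_union_right _ hyC₂)
        rcases Finset.mem_union.mp this with h' | h'
        · exact hyC₁ h'
        · exact hyC₄ h'
      have := Finset.card_lt_card hss
      omega
    obtain ⟨C₅, hC₅, hC₅sub, haC₅⟩ := ih C₁ C₄ hmeas₂ h₁ hC₄ x a hx₁ hxC₄ ha₁ haC₄
    refine ⟨C₅, hC₅, hC₅sub.trans (Finset.erase_subset_erase _ ?_), haC₅⟩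
    exact Finset.union_subset Finset.subset_union_left hC₄union

theorem strong_elimination {C₁ C₂ : Finset E} (h₁ : M.IsCircuit C₁) (h₂ : M.IsCircuit C₂)
    {x a : E} (hx₁ : x ∈ C₁) (hx₂ : x ∈ C₂) (ha₁ : a ∈ C₁) (ha₂ : a ∉ C₂) :
    ∃ C, M.IsCircuit C ∧ C ⊆ (C₁ ∪ C₂).erase x ∧ a ∈ C :=
  strong_elim_aux (C₁ ∪ C₂).card C₁ C₂ le_rfl h₁ h₂ x a hx₁ hx₂ ha₁ ha₂

theorem circuit_join_aux : ∀ n (C₁ C₂ : Finset E), (C₁ ∪ C₂).card ≤ n →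
    M.IsCircuit C₁ → M.IsCircuit C₂ → ∀ x a c, x ∈ C₁ → x ∈ C₂ → a ∈ C₁ → c ∈ C₂ → a ≠ c →
    ∃ D, M.IsCircuit D ∧ D ⊆ C₁ ∪ C₂ ∧ a ∈ D ∧ c ∈ D := by
  intro n
  induction n with
  | zero =>
    intro C₁ C₂ hcard _ _ x a c hx₁ _ _ _ _
    have : (C₁ ∪ C₂) = ∅ := Finset.card_eq_zero.mp (Nat.le_zero.mp hcard)
    exact absurd (this ▸ Finset.mem_union_left _ hx₁) (Finset.notMem_empty x)
  | succ n ih =>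
    intro C₁ C₂ hcard h₁ h₂ x a c hx₁ hx₂ ha hc hac
    by_cases hcC₁ : c ∈ C₁
    · exact ⟨C₁, h₁, Finset.subset_union_left, ha, hcC₁⟩
    by_cases haC₂ : a ∈ C₂
    · exact ⟨C₂, h₂, Finset.subset_union_right, haC₂, hc⟩
    obtain ⟨C₃, hC₃, hC₃sub, haC₃⟩ := strong_elimination h₁ h₂ hx₁ hx₂ ha haC₂
    by_cases hcC₃ : c ∈ C₃
    · exact ⟨C₃, hC₃, hC₃sub.trans (Finset.erase_subset _ _), haC₃, hcC₃⟩
    have hC₃union : C₃ ⊆ C₁ ∪ C₂ := hC₃sub.trans (Finset.erase_subset _ _)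
    have hxC₃ : x ∉ C₃ := fun h => (Finset.mem_erase.mp (hC₃sub h)).1 rfl
    have hns : ¬ C₃ ⊆ C₁ := fun h =>
      hxC₃ ((circuit_eq_of_subset hC₃ h₁ h) ▸ hx₁)
    obtain ⟨y, hyC₃, hyC₁⟩ := Finset.not_subset.mp hns
    have hyC₂ : y ∈ C₂ := by
      rcases Finset.mem_union.mp (hC₃union hyC₃) with h | h
      · exact absurd h hyC₁
      · exact h
    by_cases hss : C₃ ∪ C₂ = C₁ ∪ C₂
    · -- hard case
      obtain ⟨C₄, hC₄, hC₄sub, hcC₄⟩ := strong_elimination h₂ h₁ hx₂ hx₁ hc hcC₁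
      by_cases haC₄ : a ∈ C₄
      · refine ⟨C₄, hC₄, ?_, haC₄, hcC₄⟩
        refine (hC₄sub.trans (Finset.erase_subset _ _)).trans ?_
        rw [Finset.union_comm]
      have hxC₄ : x ∉ C₄ := fun h => (Finset.mem_erase.mp (hC₄sub h)).1 rfl
      have hC₄union : C₄ ⊆ C₁ ∪ C₂ := by
        refine (hC₄sub.trans (Finset.erase_subset _ _)).trans ?_
        rw [Finset.union_comm]
      by_cases hss₂ : C₄ ∪ C₁ = C₁ ∪ C₂
      · have hyC₄ : y ∈ C₄ := by
          have hy12 : y ∈ C₁ ∪ C₂ := Finset.mem_union_right _ hyC₂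
          rw [← hss₂] at hy12
          rcases Finset.mem_union.mp hy12 with h | h
          · exact h
          · exact absurd h hyC₁
        have hmeas : (C₃ ∪ C₄).card ≤ n := by
          have hsub : C₃ ∪ C₄ ⊆ C₁ ∪ C₂ := Finset.union_subset hC₃union hC₄union
          have hssx : C₃ ∪ C₄ ⊂ C₁ ∪ C₂ := by
            refine ⟨hsub, fun h => ?_⟩
            have : x ∈ C₃ ∪ C₄ := h (Finset.mem_union_left _ hx₁)
            rcases Finset.mem_union.mp this with h' | h'
            · exact hxC₃ h'
            · exact hxC₄ h'
          have := Finset.card_lt_card hssx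
          omega
        obtain ⟨D, hD, hDsub, haD, hcD⟩ :=
          ih C₃ C₄ hmeas hC₃ hC₄ y a c hyC₃ hyC₄ haC₃ hcC₄ hac
        exact ⟨D, hD, hDsub.trans (Finset.union_subset hC₃union hC₄union), haD, hcD⟩
      · have hnsub : C₄ ∪ C₁ ⊆ C₁ ∪ C₂ :=
          Finset.union_subset hC₄union Finset.subset_union_left
        have hmeas : (C₄ ∪ C₁).card ≤ n := by
          have := Finset.card_lt_card (⟨hnsub, fun h => hss₂ (Finset.Subset.antisymm hnsub h)⟩ :
            C₄ ∪ C₁ ⊂ C₁ ∪ C₂)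
          omega
        have hns₄ : ¬ C₄ ⊆ C₂ := fun h =>
          hxC₄ ((circuit_eq_of_subset hC₄ h₂ h) ▸ hx₂)
        obtain ⟨z, hz₄, hz₂⟩ := Finset.not_subset.mp hns₄
        have hz₁ : z ∈ C₁ := by
          rcases Finset.mem_union.mp (hC₄union hz₄) with h | h
          · exact h
          · exact absurd h hz₂
        obtain ⟨D, hD, hDsub, hcD, haD⟩ :=
          ih C₄ C₁ hmeas hC₄ h₁ z c a hz₄ hz₁ hcC₄ ha hac.symm
        exact ⟨D, hD, hDsub.trans hnsub, haD, hcD⟩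
    · have hsub : C₃ ∪ C₂ ⊆ C₁ ∪ C₂ :=
        Finset.union_subset hC₃union Finset.subset_union_right
      have hmeas : (C₃ ∪ C₂).card ≤ n := by
        have := Finset.card_lt_card (⟨hsub, fun h => hss (Finset.Subset.antisymm hsub h)⟩ :
          C₃ ∪ C₂ ⊂ C₁ ∪ C₂)
        omega
      obtain ⟨D, hD, hDsub, haD, hcD⟩ :=
        ih C₃ C₂ hmeas hC₃ h₂ y a c hyC₃ hyC₂ haC₃ hc hac
      exact ⟨D, hD, hDsub.trans hsub, haD, hcD⟩

theorem circuit_join {C₁ C₂ : Finset E} (h₁ : M.IsCircuit C₁) (h₂ : M.IsCircuit C₂)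
    {x a c : E} (hx₁ : x ∈ C₁) (hx₂ : x ∈ C₂) (ha : a ∈ C₁) (hc : c ∈ C₂) (hac : a ≠ c) :
    ∃ D, M.IsCircuit D ∧ D ⊆ C₁ ∪ C₂ ∧ a ∈ D ∧ c ∈ D :=
  circuit_join_aux (C₁ ∪ C₂).card C₁ C₂ le_rfl h₁ h₂ x a c hx₁ hx₂ ha hc hac


theorem connectedOn_of_hub {G : Finset E} {h₀ : E} (hh : h₀ ∈ G)
    (hub : ∀ x ∈ G, x ≠ h₀ → ∃ D, M.IsCircuit D ∧ D ⊆ G ∧ x ∈ D ∧ h₀ ∈ D) :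
    M.ConnectedOn G := by
  refine ⟨⟨h₀, hh⟩, ?_⟩
  intro e he f hf hef
  rcases eq_or_ne e h₀ with rfl | he0
  · obtain ⟨D, hD, hDsub, h1, h2⟩ := hub f hf (Ne.symm hef)
    exact ⟨D, hD, hDsub, h2, h1⟩
  rcases eq_or_ne f h₀ with rfl | hf0
  · obtain ⟨D, hD, hDsub, h1, h2⟩ := hub e he he0
    exact ⟨D, hD, hDsub, h1, h2⟩
  obtain ⟨D₁, hD₁, hD₁sub, he₁, hh₁⟩ := hub e he he0
  obtain ⟨D₂, hD₂, hD₂sub, hf₂, hh₂⟩ := hub f hf hf0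
  obtain ⟨D, hD, hsub, h1, h2⟩ := circuit_join hD₁ hD₂ hh₁ hh₂ he₁ hf₂ hef
  exact ⟨D, hD, hsub.trans (Finset.union_subset hD₁sub hD₂sub), h1, h2⟩

theorem lift_good {F F' S : Finset E} (hF'F : F' ⊆ F)
    (hFc : M.ConnectedOn F) (hF'c : M.ConnectedOn F')
    (hH : M.HandleOn F (F \ F'))
    (hS : M.HandleOn F' S) (hSc : M.ConnectedOn (F' \ S)) :
    ∃ T, T ⊆ S ∧ M.HandleOn F T ∧ M.ConnectedOn (F \ T) := by
  classical
  obtain ⟨hHne, hHsub, hHprop⟩ := hH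
  obtain ⟨hSne, hSsub, hSprop⟩ := hS
  obtain ⟨h₀, hh₀⟩ := hHne
  have hh₀F : h₀ ∈ F := (Finset.mem_sdiff.mp hh₀).1
  have hh₀F' : h₀ ∉ F' := (Finset.mem_sdiff.mp hh₀).2
  -- "new" circuits: IsCircuit C ∧ C ⊆ F ∧ ¬ C ⊆ F'
  have fact1 : ∀ C, M.IsCircuit C → C ⊆ F → ¬ C ⊆ F' → F \ F' ⊆ C := by
    intro C hCc hCF hCF'
    obtain ⟨x, hxC, hxF'⟩ := Finset.not_subset.mp hCF'
    exact hHprop C hCc hCF ⟨x, hxC, Finset.mem_sdiff.mpr ⟨hCF hxC, hxF'⟩⟩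
  have facth₀ : ∀ C, M.IsCircuit C → C ⊆ F → ¬ C ⊆ F' → h₀ ∈ C :=
    fun C h1 h2 h3 => fact1 C h1 h2 h3 hh₀
  have new_of_h₀ : ∀ C, M.IsCircuit C → C ⊆ F → h₀ ∈ C → ¬ C ⊆ F' :=
    fun C _ _ hh hsub => hh₀F' (hsub hh)
  -- every new circuit meets F'
  have fact2 : ∀ C, M.IsCircuit C → C ⊆ F → ¬ C ⊆ F' → ∃ t ∈ C, t ∈ F' := by
    intro C hCc hCF hCF'
    by_contra hemp
    push_neg at hemp
    obtain ⟨c, hc⟩ := circuit_nonempty hCc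
    obtain ⟨f, hf⟩ := hF'c.1
    have hcf : c ≠ f := fun h => (hemp c hc) (h ▸ hf)
    obtain ⟨D, hD, hDF, hcD, hfD⟩ := hFc.2 c (hCF hc) f (hF'F hf) hcf
    have hDnew : ¬ D ⊆ F' := fun hsub => (hemp c hc) (hsub hcD)
    have hCD : C ⊆ D := fun x hx =>
      fact1 D hD hDF hDnew (Finset.mem_sdiff.mpr ⟨hCF hx, hemp x hx⟩)
    have hCDeq := circuit_eq_of_subset hCc hD hCD
    exact hemp f (hCDeq ▸ hfD) hf
  -- a fixed old circuit O containing S, with an element outside S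
  obtain ⟨s₁, hs₁⟩ := hSne
  obtain ⟨w₁, hw₁⟩ := hSc.1
  have hw₁F' : w₁ ∈ F' := (Finset.mem_sdiff.mp hw₁).1
  have hw₁S : w₁ ∉ S := (Finset.mem_sdiff.mp hw₁).2
  have hs₁w₁ : s₁ ≠ w₁ := fun h => hw₁S (h ▸ hs₁)
  obtain ⟨O, hO, hOF', hs₁O, hw₁O⟩ := hF'c.2 s₁ (hSsub hs₁) w₁ hw₁F' hs₁w₁
  have hSO : S ⊆ O := hSprop O hO hOF' ⟨s₁, hs₁O, hs₁⟩
  -- Lemma 6: swap a new circuit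
  have factL6 : ∀ s' ∈ S, ∀ s₀ ∈ S, ∀ C, M.IsCircuit C → C ⊆ F → ¬ C ⊆ F' →
      s₀ ∈ C → s' ∉ C →
      ∃ C', (M.IsCircuit C' ∧ C' ⊆ F ∧ ¬ C' ⊆ F') ∧ s' ∈ C' ∧ s₀ ∉ C' := by
    intro s' hs' s₀ hs₀ C hCc hCF hCF' hs₀C hs'C
    obtain ⟨G, hG, hGsub, hs'G⟩ :=
      strong_elimination hO hCc (hSO hs₀) hs₀C (hSO hs') hs'C
    have hGF : G ⊆ F := (hGsub.trans (Finset.erase_subset _ _)).trans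
      (Finset.union_subset (hOF'.trans hF'F) hCF)
    have hs₀G : s₀ ∉ G := fun h => (Finset.mem_erase.mp (hGsub h)).1 rfl
    by_cases hGF' : G ⊆ F'
    · have hsg : S ⊆ G := hSprop G hG hGF' ⟨s', hs'G, hs'⟩
      exact absurd (hsg hs₀) hs₀G
    · exact ⟨G, ⟨hG, hGF, hGF'⟩, hs'G, hs₀G⟩
  -- main structural fact: an external new circuit missing part of S
  have factMain : ∃ C₀, (M.IsCircuit C₀ ∧ C₀ ⊆ F ∧ ¬ C₀ ⊆ F') ∧
      (∃ w ∈ C₀, w ∈ F' ∧ w ∉ S) ∧ ∃ s₀ ∈ S, s₀ ∉ C₀ := by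
    by_contra hcon
    push_neg at hcon
    -- hcon : every external new circuit contains S
    have hne : h₀ ≠ w₁ := fun h => hh₀F' (h ▸ hw₁F')
    obtain ⟨Cs, hCs, hCsF, hh₀Cs, hw₁Cs⟩ := hFc.2 h₀ hh₀F w₁ (hF'F hw₁F') hne
    have hCsF' : ¬ Cs ⊆ F' := new_of_h₀ Cs hCs hCsF hh₀Cs
    have hSCs : S ⊆ Cs := by
      intro s hs
      exact hcon Cs ⟨hCs, hCsF, hCsF'⟩ ⟨w₁, hw₁Cs, hw₁F', hw₁S⟩ s hs
    -- internal new circuits are unique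
    have internal_unique : ∀ G₁ G₂, (M.IsCircuit G₁ ∧ G₁ ⊆ F ∧ ¬ G₁ ⊆ F') →
        (M.IsCircuit G₂ ∧ G₂ ⊆ F ∧ ¬ G₂ ⊆ F') →
        (∀ y ∈ G₁, y ∈ F' → y ∈ S) → (∀ y ∈ G₂, y ∈ F' → y ∈ S) → G₁ = G₂ := by
      rintro G₁ G₂ ⟨p1, p2, p3⟩ ⟨q1, q2, q3⟩ hi1 hi2
      by_contra hne12
      obtain ⟨O₂, hO₂, hO₂sub⟩ :=
        weak_elim p1 q1 hne12 (facth₀ _ p1 p2 p3) (facth₀ _ q1 q2 q3)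
      have hh₀O₂ : h₀ ∉ O₂ := fun h => (Finset.mem_erase.mp (hO₂sub h)).1 rfl
      have hO₂F : O₂ ⊆ F := (hO₂sub.trans (Finset.erase_subset _ _)).trans
        (Finset.union_subset p2 q2)
      have hO₂F' : O₂ ⊆ F' := by
        by_contra hnsub
        exact hh₀O₂ (facth₀ O₂ ⟨hO₂.1, hO₂.2⟩ hO₂F hnsub)
      have hO₂S : O₂ ⊆ S := by
        intro y hy
        rcases Finset.mem_union.mp ((Finset.erase_subset _ _) (hO₂sub hy)) with h | h
        · exact hi1 y h (hO₂F' hy)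
        · exact hi2 y h (hO₂F' hy)
      obtain ⟨z, hz⟩ := circuit_nonempty hO₂
      have hSsubO₂ : S ⊆ O₂ := hSprop O₂ hO₂ hO₂F' ⟨z, hz, hO₂S hz⟩
      have hO₂eqS : O₂ = S := Finset.Subset.antisymm hO₂S hSsubO₂
      have hO₂O : O₂ = O := circuit_eq_of_subset hO₂ hO (hO₂eqS ▸ hSO : O₂ ⊆ O)
      apply hw₁S
      rw [← hO₂eqS, hO₂O]
      exact hw₁O
    -- construct an internal circuit avoiding s, for each s ∈ S
    have hGs : ∀ s ∈ S, ∃ G, (M.IsCircuit G ∧ G ⊆ F ∧ ¬ G ⊆ F') ∧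
        (∀ y ∈ G, y ∈ F' → y ∈ S) ∧ s ∉ G := by
      intro s hs
      obtain ⟨G, hG, hGsub, hh₀G⟩ :=
        strong_elimination hCs hO (hSCs hs) (hSO hs) hh₀Cs (fun h => hh₀F' (hOF' h))
      have hGF : G ⊆ F := (hGsub.trans (Finset.erase_subset _ _)).trans
        (Finset.union_subset hCsF (hOF'.trans hF'F))
      have hGF' : ¬ G ⊆ F' := new_of_h₀ G hG hGF hh₀G
      have hsG : s ∉ G := fun h => (Finset.mem_erase.mp (hGsub h)).1 rfl
      refine ⟨G, ⟨hG, hGF, hGF'⟩, ?_, hsG⟩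
      intro y hyG hyF'
      by_contra hyS
      have : S ⊆ G := hcon G ⟨hG, hGF, hGF'⟩ ⟨y, hyG, hyF', hyS⟩
      exact hsG (this hs)
    obtain ⟨G₁, hG₁Nw, hG₁int, hs₁G₁⟩ := hGs s₁ hs₁
    obtain ⟨t, htG₁, htF'⟩ := fact2 G₁ hG₁Nw.1 hG₁Nw.2.1 hG₁Nw.2.2
    have htS : t ∈ S := hG₁int t htG₁ htF'
    obtain ⟨Gt, hGtNw, hGtint, htGt⟩ := hGs t htS
    have heq := internal_unique G₁ Gt hG₁Nw hGtNw hG₁int hGtint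
    exact htGt (heq ▸ htG₁)
  -- construction of T
  obtain ⟨C₀, hC₀Nw, ⟨w₀, hw₀C₀, hw₀F', hw₀S⟩, s₀, hs₀S, hs₀C₀⟩ := factMain
  set T : Finset E := S.filter
    (fun s' => ∀ C, M.IsCircuit C → C ⊆ F → ¬ C ⊆ F' → (s' ∈ C ↔ s₀ ∈ C)) with hT
  have hs₀T : s₀ ∈ T := Finset.mem_filter.mpr ⟨hs₀S, fun C _ _ _ => Iff.rfl⟩
  have hTS : T ⊆ S := Finset.filter_subset _ _
  have havoid : ∀ C, M.IsCircuit C → C ⊆ F → ¬ C ⊆ F' → s₀ ∉ C → ∀ t ∈ T, t ∉ C := by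
    intro C p1 p2 p3 hs₀ t ht htC
    exact hs₀ (((Finset.mem_filter.mp ht).2 C p1 p2 p3).mp htC)
  have hC₀T : ∀ t ∈ T, t ∉ C₀ := havoid C₀ hC₀Nw.1 hC₀Nw.2.1 hC₀Nw.2.2 hs₀C₀
  have hHandle : M.HandleOn F T := by
    refine ⟨⟨s₀, hs₀T⟩, (hTS.trans hSsub).trans hF'F, ?_⟩
    rintro C hCc hCF ⟨x, hxC, hxT⟩
    by_cases hCF' : C ⊆ F'
    · exact hTS.trans (hSprop C hCc hCF' ⟨x, hxC, hTS hxT⟩)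
    · have hs₀C : s₀ ∈ C := ((Finset.mem_filter.mp hxT).2 C hCc hCF hCF').mp hxC
      intro t ht
      exact ((Finset.mem_filter.mp ht).2 C hCc hCF hCF').mpr hs₀C
  have hC₀subFT : C₀ ⊆ F \ T := fun x hx =>
    Finset.mem_sdiff.mpr ⟨hC₀Nw.2.1 hx, fun hxT => hC₀T x hxT hx⟩
  have hh₀C₀ : h₀ ∈ C₀ := facth₀ C₀ hC₀Nw.1 hC₀Nw.2.1 hC₀Nw.2.2
  have hhub : ∀ x ∈ F \ T, x ≠ h₀ → ∃ D, M.IsCircuit D ∧ D ⊆ F \ T ∧ x ∈ D ∧ h₀ ∈ D := by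
    intro x hx hxh₀
    obtain ⟨hxF, hxT⟩ := Finset.mem_sdiff.mp hx
    by_cases hxF' : x ∈ F'
    · by_cases hxS : x ∈ S
      · -- x ∈ S \ T : some new circuit separates x from s₀
        have hex : ∃ C, (M.IsCircuit C ∧ C ⊆ F ∧ ¬ C ⊆ F') ∧ ¬ (x ∈ C ↔ s₀ ∈ C) := by
          by_contra hall
          push_neg at hall
          exact hxT (Finset.mem_filter.mpr ⟨hxS, fun C p1 p2 p3 => hall C ⟨p1, p2, p3⟩⟩)
        obtain ⟨C, hCNw, hCiff⟩ := hex
        by_cases hxC : x ∈ C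
        · have hs₀C : s₀ ∉ C := fun h => hCiff ⟨fun _ => h, fun _ => hxC⟩
          refine ⟨C, hCNw.1, ?_, hxC, facth₀ C hCNw.1 hCNw.2.1 hCNw.2.2⟩
          intro z hz
          exact Finset.mem_sdiff.mpr ⟨hCNw.2.1 hz,
            fun hzT => havoid C hCNw.1 hCNw.2.1 hCNw.2.2 hs₀C z hzT hz⟩
        · have hs₀C : s₀ ∈ C := by
            by_contra h
            exact hCiff (iff_of_false hxC h)
          obtain ⟨C', hC'Nw, hxC', hs₀C'⟩ :=
            factL6 x hxS s₀ hs₀S C hCNw.1 hCNw.2.1 hCNw.2.2 hs₀C hxC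
          refine ⟨C', hC'Nw.1, ?_, hxC', facth₀ C' hC'Nw.1 hC'Nw.2.1 hC'Nw.2.2⟩
          intro z hz
          exact Finset.mem_sdiff.mpr ⟨hC'Nw.2.1 hz,
            fun hzT => havoid C' hC'Nw.1 hC'Nw.2.1 hC'Nw.2.2 hs₀C' z hzT hz⟩
      · -- x ∈ F' \ S
        by_cases hxC₀ : x ∈ C₀
        · exact ⟨C₀, hC₀Nw.1, hC₀subFT, hxC₀, hh₀C₀⟩
        · have hxw₀ : x ≠ w₀ := fun h => hxC₀ (h ▸ hw₀C₀)
          obtain ⟨Dx, hDx, hDxsub, hxDx, hw₀Dx⟩ := hSc.2 x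
            (Finset.mem_sdiff.mpr ⟨hxF', hxS⟩) w₀ (Finset.mem_sdiff.mpr ⟨hw₀F', hw₀S⟩) hxw₀
          have hDxFT : Dx ⊆ F \ T := by
            intro z hz
            have hzz := Finset.mem_sdiff.mp (hDxsub hz)
            exact Finset.mem_sdiff.mpr ⟨hF'F hzz.1, fun hzT => hzz.2 (hTS hzT)⟩
          obtain ⟨D, hD, hDsub, hxD, hh₀D⟩ :=
            circuit_join hDx hC₀Nw.1 hw₀Dx hw₀C₀ hxDx hh₀C₀ hxh₀
          exact ⟨D, hD, hDsub.trans (Finset.union_subset hDxFT hC₀subFT), hxD, hh₀D⟩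
    · -- x ∈ H
      exact ⟨C₀, hC₀Nw.1, hC₀subFT,
        fact1 C₀ hC₀Nw.1 hC₀Nw.2.1 hC₀Nw.2.2 (Finset.mem_sdiff.mpr ⟨hxF, hxF'⟩), hh₀C₀⟩
  have hh₀FT : h₀ ∈ F \ T :=
    Finset.mem_sdiff.mpr ⟨hh₀F, fun h => hh₀F' (hSsub (hTS h))⟩
  exact ⟨T, hTS, hHandle, connectedOn_of_hub hh₀FT hhub⟩


theorem base_good {F F₁ : Finset E} (h1F : F₁ ⊆ F) (hFc : M.ConnectedOn F)
    (hC : M.IsCircuit F₁) (hH : M.HandleOn F (F \ F₁)) :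
    ∃ T₁ T₂, Disjoint T₁ T₂ ∧ T₁ ⊆ F₁ ∧ T₂ ⊆ F₁ ∧
      (M.HandleOn F T₁ ∧ M.ConnectedOn (F \ T₁)) ∧
      (M.HandleOn F T₂ ∧ M.ConnectedOn (F \ T₂)) := by
  classical
  obtain ⟨hHne, hHsub, hHprop⟩ := hH
  obtain ⟨h₀, hh₀⟩ := hHne
  have hh₀F : h₀ ∈ F := (Finset.mem_sdiff.mp hh₀).1
  have hh₀F₁ : h₀ ∉ F₁ := (Finset.mem_sdiff.mp hh₀).2
  have fact1 : ∀ C, M.IsCircuit C → C ⊆ F → ¬ C ⊆ F₁ → F \ F₁ ⊆ C := by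
    intro C hCc hCF hCF₁
    obtain ⟨x, hxC, hxF₁⟩ := Finset.not_subset.mp hCF₁
    exact hHprop C hCc hCF ⟨x, hxC, Finset.mem_sdiff.mpr ⟨hCF hxC, hxF₁⟩⟩
  have facth₀ : ∀ C, M.IsCircuit C → C ⊆ F → ¬ C ⊆ F₁ → h₀ ∈ C :=
    fun C h1 h2 h3 => fact1 C h1 h2 h3 hh₀
  have old_eq : ∀ G, M.IsCircuit G → G ⊆ F₁ → G = F₁ :=
    fun G hG hsub => circuit_eq_of_subset hG hC hsub
  obtain ⟨f₁, hf₁⟩ := circuit_nonempty hC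
  have hne : h₀ ≠ f₁ := fun h => hh₀F₁ (h ▸ hf₁)
  obtain ⟨C₁, hC₁, hC₁F, hh₀C₁, hf₁C₁⟩ := hFc.2 h₀ hh₀F f₁ (h1F hf₁) hne
  have hC₁F₁ : ¬ C₁ ⊆ F₁ := fun h => hh₀F₁ (h hh₀C₁)
  have hC₁ne : C₁ ≠ F₁ := fun h => hh₀F₁ (h ▸ hh₀C₁)
  obtain ⟨C₂, hC₂, hC₂sub⟩ := weak_elim hC₁ hC hC₁ne hf₁C₁ hf₁
  have hf₁C₂ : f₁ ∉ C₂ := fun h => (Finset.mem_erase.mp (hC₂sub h)).1 rfl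
  have hC₂F : C₂ ⊆ F := (hC₂sub.trans (Finset.erase_subset _ _)).trans
    (Finset.union_subset hC₁F h1F)
  have hC₂F₁ : ¬ C₂ ⊆ F₁ := fun h => hf₁C₂ ((old_eq C₂ hC₂ h) ▸ hf₁)
  have hC₁₂ : C₁ ≠ C₂ := fun h => hf₁C₂ (h ▸ hf₁C₁)
  have pairU : ∀ D₁ D₂, M.IsCircuit D₁ → D₁ ⊆ F → ¬ D₁ ⊆ F₁ →
      M.IsCircuit D₂ → D₂ ⊆ F → ¬ D₂ ⊆ F₁ → D₁ ≠ D₂ → F₁ ⊆ D₁ ∪ D₂ := by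
    intro D₁ D₂ p1 p2 p3 q1 q2 q3 h12
    obtain ⟨G, hG, hGsub⟩ := weak_elim p1 q1 h12 (facth₀ _ p1 p2 p3) (facth₀ _ q1 q2 q3)
    have hh₀G : h₀ ∉ G := fun h => (Finset.mem_erase.mp (hGsub h)).1 rfl
    have hGF : G ⊆ F := (hGsub.trans (Finset.erase_subset _ _)).trans
      (Finset.union_subset p2 q2)
    have hGF₁ : G ⊆ F₁ := by
      by_contra hnsub
      exact hh₀G (facth₀ G hG hGF hnsub)
    have hGeq := old_eq G hG hGF₁
    rw [← hGeq]
    exact hGsub.trans (Finset.erase_subset _ _)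
  have good : ∀ D₁ D₂, M.IsCircuit D₁ → D₁ ⊆ F → ¬ D₁ ⊆ F₁ →
      M.IsCircuit D₂ → D₂ ⊆ F → ¬ D₂ ⊆ F₁ → D₁ ≠ D₂ →
      M.HandleOn F (F₁ \ D₁) ∧ M.ConnectedOn (F \ (F₁ \ D₁)) := by
    intro D₁ D₂ p1 p2 p3 q1 q2 q3 h12
    have hne' : ¬ F₁ ⊆ D₁ := by
      intro h
      have := circuit_eq_of_subset hC p1 h
      exact p3 (this ▸ Finset.Subset.rfl)
    have hT1ne : (F₁ \ D₁).Nonempty := by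
      obtain ⟨u, hu1, hu2⟩ := Finset.not_subset.mp hne'
      exact ⟨u, Finset.mem_sdiff.mpr ⟨hu1, hu2⟩⟩
    constructor
    · refine ⟨hT1ne, Finset.sdiff_subset.trans h1F, ?_⟩
      rintro C hCc hCF ⟨x, hxC, hxT⟩
      have hx := Finset.mem_sdiff.mp hxT
      by_cases hCF₁ : C ⊆ F₁
      · rw [old_eq C hCc hCF₁]
        exact Finset.sdiff_subset
      · have hCD₁ : C ≠ D₁ := fun h => hx.2 (h ▸ hxC)
        have hU := pairU C D₁ hCc hCF hCF₁ p1 p2 p3 hCD₁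
        intro z hz
        have hzx := Finset.mem_sdiff.mp hz
        rcases Finset.mem_union.mp (hU hzx.1) with h | h
        · exact h
        · exact absurd h hzx.2
    · have hEq : F \ (F₁ \ D₁) = D₁ := by
        ext x
        simp only [Finset.mem_sdiff]
        constructor
        · rintro ⟨hxF, hx⟩
          by_cases hxD : x ∈ D₁
          · exact hxD
          · by_cases hxF₁ : x ∈ F₁
            · exact absurd ⟨hxF₁, hxD⟩ hx
            · exact fact1 D₁ p1 p2 p3 (Finset.mem_sdiff.mpr ⟨hxF, hxF₁⟩)
        · intro hxD
          exact ⟨p2 hxD, fun h => h.2 hxD⟩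
      rw [hEq]
      exact ⟨circuit_nonempty p1, fun e he f hf hef => ⟨D₁, p1, Finset.Subset.rfl, he, hf⟩⟩
  refine ⟨F₁ \ C₁, F₁ \ C₂, ?_, Finset.sdiff_subset, Finset.sdiff_subset,
    good C₁ C₂ hC₁ hC₁F hC₁F₁ hC₂ hC₂F hC₂F₁ hC₁₂,
    good C₂ C₁ hC₂ hC₂F hC₂F₁ hC₁ hC₁F hC₁F₁ hC₁₂.symm⟩
  rw [Finset.disjoint_left]
  intro a ha hb
  have h1 := Finset.mem_sdiff.mp ha
  have h2 := Finset.mem_sdiff.mp hb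
  rcases Finset.mem_union.mp
    (pairU C₁ C₂ hC₁ hC₁F hC₁F₁ hC₂ hC₂F hC₂F₁ hC₁₂ h1.1) with h | h
  · exact h1.2 h
  · exact h2.2 h


theorem cons_disjoint {n : ℕ} {A : Finset E} {g : Fin n → Finset E}
    (hA : ∀ i, Disjoint A (g i)) (hg : ∀ i j, i ≠ j → Disjoint (g i) (g j)) :
    ∀ i j : Fin (n + 1), i ≠ j → Disjoint (Fin.cons (α := fun _ => Finset E) A g i) (Fin.cons (α := fun _ => Finset E) A g j) := by
  intro i j hij
  rcases Fin.eq_zero_or_eq_succ i with rfl | ⟨i', rfl⟩ <;>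
    rcases Fin.eq_zero_or_eq_succ j with rfl | ⟨j', rfl⟩
  · exact absurd rfl hij
  · simpa using hA j'
  · simpa using (hA i').symm
  · simp only [Fin.cons_succ]
    exact hg i' j' (fun h => hij (by rw [h]))

theorem cons_forall {n : ℕ} {P : Finset E → Prop} {A : Finset E} {g : Fin n → Finset E}
    (hA : P A) (hg : ∀ i, P (g i)) : ∀ i, P (Fin.cons (α := fun _ => Finset E) A g i) := by
  intro i
  rcases Fin.eq_zero_or_eq_succ i with rfl | ⟨j, rfl⟩
  · simpa using hA
  · simpa using hg j

theorem key (M : FinMatroid E) : ∀ k, 2 ≤ k → ∀ F : ℕ → Finset E, M.IsCircuit (F 1) →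
    (∀ i, 1 ≤ i → i < k → F i ⊂ F (i + 1)) →
    (∀ i, 1 ≤ i → i ≤ k → M.ConnectedOn (F i)) →
    (∀ i, 2 ≤ i → i ≤ k → M.HandleOn (F i) (F i \ F (i - 1))) →
    ∃ T : Fin (k + 1) → Finset E,
      (∀ i j, i ≠ j → Disjoint (T i) (T j)) ∧
      ∀ i, M.HandleOn (F k) (T i) ∧ M.ConnectedOn (F k \ T i) := by
  intro k hk
  induction k, hk using Nat.le_induction with
  | base =>
    intro F hF1 hchain hFconn hhandle
    have h12 : F 1 ⊂ F 2 := hchain 1 le_rfl (by omega)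
    have hH2 : M.HandleOn (F 2) (F 2 \ F 1) := by
      have h := hhandle 2 le_rfl le_rfl
      norm_num at h
      exact h
    obtain ⟨T₁, T₂, hdisj, hT₁sub, hT₂sub, hg₁, hg₂⟩ :=
      base_good h12.subset (hFconn 2 one_le_two le_rfl) hF1 hH2
    have hdH : ∀ T, T ⊆ F 1 → Disjoint T (F 2 \ F 1) := by
      intro T hT
      exact Finset.disjoint_sdiff.mono_left hT
    have hHHgood : M.HandleOn (F 2) (F 2 \ F 1) ∧ M.ConnectedOn (F 2 \ (F 2 \ F 1)) := by
      refine ⟨hH2, ?_⟩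
      have heq : F 2 \ (F 2 \ F 1) = F 1 := by
        ext x
        simp only [Finset.mem_sdiff, not_and, not_not]
        constructor
        · rintro ⟨h1, h2⟩; exact h2 h1
        · intro h; exact ⟨h12.subset h, fun _ => h⟩
      rw [heq]
      exact hFconn 1 le_rfl one_le_two
    refine ⟨Fin.cons T₁ (Fin.cons T₂ (fun _ => F 2 \ F 1)), ?_, ?_⟩
    · apply cons_disjoint
      · apply cons_forall (P := fun B => Disjoint T₁ B)
        · exact hdisj
        · exact fun _ => hdH T₁ hT₁sub
      · apply cons_disjoint
        · exact fun _ => hdH T₂ hT₂sub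
        · intro i j hij
          exact absurd (Subsingleton.elim i j) hij
    · apply cons_forall (P := fun B => M.HandleOn (F 2) B ∧ M.ConnectedOn (F 2 \ B))
      · exact hg₁
      · apply cons_forall (P := fun B => M.HandleOn (F 2) B ∧ M.ConnectedOn (F 2 \ B))
        · exact hg₂
        · exact fun _ => hHHgood
  | succ k hk2 ih =>
    intro F hF1 hchain hFconn hhandle
    obtain ⟨T, hTdisj, hTgood⟩ := ih F hF1
      (fun i h1 h2 => hchain i h1 (by omega))
      (fun i h1 h2 => hFconn i h1 (by omega))
      (fun i h1 h2 => hhandle i h1 (by omega))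
    have hsub : F k ⊆ F (k + 1) := (hchain k (by omega) (by omega)).subset
    have hH : M.HandleOn (F (k + 1)) (F (k + 1) \ F k) := by
      have h := hhandle (k + 1) (by omega) le_rfl
      simpa using h
    have hlift : ∀ i : Fin (k + 1), ∃ T', T' ⊆ T i ∧ M.HandleOn (F (k + 1)) T' ∧
        M.ConnectedOn (F (k + 1) \ T') := by
      intro i
      obtain ⟨h1, h2⟩ := hTgood i
      exact lift_good hsub (hFconn (k + 1) (by omega) le_rfl)
        (hFconn k (by omega) (by omega)) hH h1 h2
    choose g hgsub hgh hgc using hlift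
    refine ⟨Fin.cons (F (k + 1) \ F k) g, ?_, ?_⟩
    · apply cons_disjoint
      · intro i
        exact Finset.sdiff_disjoint.mono_right ((hgsub i).trans (hTgood i).1.2.1)
      · intro i j hij
        exact (hTdisj i j hij).mono (hgsub i) (hgsub j)
    · apply cons_forall
        (P := fun B => M.HandleOn (F (k + 1)) B ∧ M.ConnectedOn (F (k + 1) \ B))
      · refine ⟨hH, ?_⟩
        have heq : F (k + 1) \ (F (k + 1) \ F k) = F k := by
          ext x
          simp only [Finset.mem_sdiff, not_and, not_not]
          constructor
          · rintro ⟨h1, h2⟩; exact h2 h1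
          · intro h; exact ⟨hsub h, fun _ => h⟩
        rw [heq]
        exact hFconn k (by omega) (by omega)
      · exact fun i => ⟨hgh i, hgc i⟩

end Aux

/-- **Theorem (Lower bound for non-disconnective handles).**
Let `M` be a connected matroid on a finite set `E` admitting a handle decomposition
`F₁ ⊊ ⋯ ⊊ F_k = E` of length `k ≥ 2`.  Then `M` has at least `k + 1` pairwise disjoint
non-disconnective handles: handles `H₀, …, H_k` such that each deletion `M ∖ Hᵢ`
is connected. -/
theorem exists_k_add_one_nondisconnective_handles
    (M : FinMatroid E) (hconn : M.Connected) (k : ℕ) (hk : 2 ≤ k)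
    (F : ℕ → Finset E)
    (hF1 : M.IsCircuit (F 1)) (hFk : F k = Finset.univ)
    (hchain : ∀ i, 1 ≤ i → i < k → F i ⊂ F (i + 1))
    (hFconn : ∀ i, 1 ≤ i → i ≤ k → M.ConnectedOn (F i))
    (hhandle : ∀ i, 2 ≤ i → i ≤ k → M.HandleOn (F i) (F i \ F (i - 1))) :
    ∃ H : Fin (k + 1) → Finset E,
      (∀ i j, i ≠ j → Disjoint (H i) (H j)) ∧
      ∀ i, M.Handle (H i) ∧ M.ConnectedOn (H i)ᶜ := by
  obtain ⟨T, hdisj, hgood⟩ := key M k hk F hF1 hchain hFconn hhandle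
  refine ⟨T, hdisj, ?_⟩
  intro i
  obtain ⟨⟨hne, hsub, hprop⟩, hconn'⟩ := hgood i
  constructor
  · exact ⟨hne, fun C hC hm => hprop C hC (by rw [hFk]; exact Finset.subset_univ C) hm⟩
  · have heq : F k \ T i = (T i)ᶜ := by
      rw [hFk, Finset.compl_eq_univ_sdiff]
    rwa [heq] at hconn'


end FinMatroid
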